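/- arXiv:1307.5624 — 2 statements merged into one kernel-verified Lean document; each statement's English description precedes it below -/
import Mathlib

section
/- The second-order Eulerian numbers with traditional indexing satisfy B(n,k) = ∑_{j=0}^{k} (−1)^{k-j} · {n+j over j}_{≥2} · C(n−j, k−j), where {m over j}_{≥2} counts partitions of an m-set into j blocks each of size at least 2. -/
/-- The associated Stirling subset number `{m over k}_{≥2}`: the number of
partitions of an `m`-element set into `k` blocks, each of size at least 2. -/
noncomputable def assocStirling (m k : ℕ) : ℕ :=
  Nat.card {P : Finpartition (Finset.univ : Finset (Fin m)) //
    P.parts.card = k ∧ ∀ p ∈ P.parts, 2 ≤ p.card}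

open Finset

variable {α β : Type*} [DecidableEq α] [DecidableEq β]

def Finpartition.mapEmb (f : α ↪ β) {s : Finset α} (P : Finpartition s) :
    Finpartition (s.map f) where
  parts := P.parts.map (Finset.mapEmbedding f).toEmbedding
  supIndep := by
    rw [Finset.supIndep_iff_pairwiseDisjoint]
    rintro a ha b hb hab
    simp only [coe_map, Set.mem_image, mem_coe, RelEmbedding.coe_toEmbedding,
      Finset.mapEmbedding_apply] at ha hb
    obtain ⟨a', ha', rfl⟩ := ha
    obtain ⟨b', hb', rfl⟩ := hb
    simp only [id, Function.onFun]
    rw [Finset.disjoint_map]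
    exact P.disjoint ha' hb' (by rintro rfl; exact hab rfl)
  sup_parts := by
    ext x
    simp only [Finset.mem_sup, Finset.mem_map, RelEmbedding.coe_toEmbedding,
      Finset.mapEmbedding_apply, id]
    constructor
    · rintro ⟨v, ⟨p, hp, rfl⟩, hx⟩
      rw [Finset.mem_map] at hx
      obtain ⟨a, ha, rfl⟩ := hx
      exact ⟨a, P.le hp ha, rfl⟩
    · rintro ⟨a, ha, rfl⟩
      rw [← P.sup_parts, Finset.mem_sup] at ha
      obtain ⟨p, hp, hap⟩ := ha
      exact ⟨p.map f, ⟨p, hp, rfl⟩, Finset.mem_map_of_mem f hap⟩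
  bot_notMem := by
    simp only [Finset.bot_eq_empty, Finset.mem_map, RelEmbedding.coe_toEmbedding,
      Finset.mapEmbedding_apply]
    rintro ⟨p, hp, h⟩
    rw [Finset.map_eq_empty] at h
    exact P.bot_notMem (by rw [Finset.bot_eq_empty, ← h]; exact hp)

lemma Finpartition.mapEmb_parts (f : α ↪ β) {s : Finset α} (P : Finpartition s) :
    (P.mapEmb f).parts = P.parts.map (Finset.mapEmbedding f).toEmbedding := rfl

lemma mapEmb_bij (f : α ↪ β) (s : Finset α) (k : ℕ) :
    Nat.card {P : Finpartition (s.map f) // P.parts.card = k ∧ ∀ p ∈ P.parts, 2 ≤ p.card}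
    = Nat.card {P : Finpartition s // P.parts.card = k ∧ ∀ p ∈ P.parts, 2 ≤ p.card} := by
  symm
  apply Nat.card_congr
  refine Equiv.ofBijective (fun P => ⟨Finpartition.mapEmb f P.1, ?_, ?_⟩) ⟨?_, ?_⟩
  · rw [Finpartition.mapEmb_parts, Finset.card_map]; exact P.2.1
  · rintro p hp
    rw [Finpartition.mapEmb_parts, Finset.mem_map] at hp
    obtain ⟨q, hq, rfl⟩ := hp
    simp only [RelEmbedding.coe_toEmbedding, Finset.mapEmbedding_apply, Finset.card_map]
    exact P.2.2 q hq
  · rintro ⟨P, hP⟩ ⟨Q, hQ⟩ h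
    simp only [Subtype.mk_eq_mk] at h ⊢
    have := congrArg Finpartition.parts h
    rw [Finpartition.mapEmb_parts, Finpartition.mapEmb_parts] at this
    exact Finpartition.ext (Finset.map_injective _ this)
  · rintro ⟨Q, hQ1, hQ2⟩
    have hsub : ∀ q ∈ Q.parts, (q.preimage f f.injective.injOn).map f = q := by
      intro q hq
      obtain ⟨u, hu, rfl⟩ := Finset.subset_map_iff.mp (Q.le hq)
      rw [Finset.preimage_map]
    refine ⟨⟨⟨Q.parts.image (fun q => q.preimage f f.injective.injOn), ?_, ?_, ?_⟩, ?_, ?_⟩, ?_⟩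
    · rw [Finset.supIndep_iff_pairwiseDisjoint]
      rintro a ha b hb hab
      simp only [coe_image, Set.mem_image, mem_coe] at ha hb
      obtain ⟨a', ha', rfl⟩ := ha
      obtain ⟨b', hb', rfl⟩ := hb
      have hne : a' ≠ b' := by rintro rfl; exact hab rfl
      have := Q.disjoint ha' hb' hne
      simp only [id, Function.onFun]
      rw [← Finset.disjoint_map f, hsub _ ha', hsub _ hb']
      exact this
    · ext a
      simp only [Finset.mem_sup, Finset.mem_image, id]
      constructor
      · rintro ⟨v, ⟨q, hq, rfl⟩, ha⟩
        rw [Finset.mem_preimage] at ha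
        have := Q.le hq ha
        rw [Finset.mem_map] at this
        obtain ⟨b, hb, hba⟩ := this
        rwa [← f.injective hba]
      · intro ha
        have : f a ∈ s.map f := Finset.mem_map_of_mem f ha
        rw [← Q.sup_parts, Finset.mem_sup] at this
        obtain ⟨q, hq, haq⟩ := this
        exact ⟨q.preimage f f.injective.injOn, ⟨q, hq, rfl⟩, by rwa [Finset.mem_preimage]⟩
    · simp only [Finset.bot_eq_empty, Finset.mem_image]
      rintro ⟨q, hq, h⟩
      have := hsub q hq
      rw [h, Finset.map_empty] at this
      exact Q.bot_notMem (by rw [Finset.bot_eq_empty, this]; exact hq)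
    · rw [Finset.card_image_of_injOn, hQ1]
      intro a ha b hb h
      have h' : a.preimage f f.injective.injOn = b.preimage f f.injective.injOn := h
      rw [← hsub a ha, ← hsub b hb, h']
    · rintro p hp
      simp only [Finset.mem_image] at hp
      obtain ⟨q, hq, rfl⟩ := hp
      have : (q.preimage f f.injective.injOn).card = q.card := by
        conv_rhs => rw [← hsub q hq]
        rw [Finset.card_map]
      rw [this]; exact hQ2 q hq
    · apply Subtype.ext
      apply Finpartition.ext
      rw [Finpartition.mapEmb_parts]
      ext q
      simp only [Finset.mem_map, Finset.mem_image, RelEmbedding.coe_toEmbedding,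
        Finset.mapEmbedding_apply]
      constructor
      · rintro ⟨v, ⟨q', hq', rfl⟩, rfl⟩
        rwa [hsub q' hq']
      · intro hq
        exact ⟨q.preimage f f.injective.injOn, ⟨q, hq, rfl⟩, hsub q hq⟩


/-- Remove an element from every part of a partition (assuming `{x}` is not itself a part). -/
def Finpartition.eraseElt {s : Finset α} (P : Finpartition s) (x : α)
    (hx : {x} ∉ P.parts) : Finpartition (s.erase x) where
  parts := P.parts.image (fun p => p.erase x)
  supIndep := by
    rw [Finset.supIndep_iff_pairwiseDisjoint]
    rintro a ha b hb hab
    simp only [coe_image, Set.mem_image, mem_coe] at ha hb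
    obtain ⟨p, hp, rfl⟩ := ha
    obtain ⟨q, hq, rfl⟩ := hb
    have hpq : p ≠ q := by rintro rfl; exact hab rfl
    exact Finset.disjoint_of_subset_left (Finset.erase_subset _ _)
      (Finset.disjoint_of_subset_right (Finset.erase_subset _ _) (P.disjoint hp hq hpq))
  sup_parts := by
    ext a
    simp only [Finset.mem_sup, Finset.mem_image, id, Finset.mem_erase]
    constructor
    · rintro ⟨v, ⟨p, hp, rfl⟩, ha⟩
      rw [Finset.mem_erase] at ha
      exact ⟨ha.1, P.le hp ha.2⟩
    · rintro ⟨hax, has⟩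
      obtain ⟨p, hp, hap⟩ := P.exists_mem has
      exact ⟨p.erase x, ⟨p, hp, rfl⟩, Finset.mem_erase.mpr ⟨hax, hap⟩⟩
  bot_notMem := by
    simp only [Finset.bot_eq_empty, Finset.mem_image]
    rintro ⟨p, hp, h⟩
    rcases P.nonempty_of_mem_parts hp with ⟨a, ha⟩
    rcases eq_or_ne a x with rfl | hne
    · have : p = {a} := by
        apply Finset.eq_singleton_iff_unique_mem.mpr
        refine ⟨ha, fun b hb => ?_⟩
        by_contra hba
        exact (Finset.notMem_empty b) (h ▸ Finset.mem_erase.mpr ⟨hba, hb⟩)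
      exact hx (this ▸ hp)
    · exact (Finset.notMem_empty a) (h ▸ Finset.mem_erase.mpr ⟨hne, ha⟩)

lemma Finpartition.eraseElt_parts {s : Finset α} (P : Finpartition s) (x : α)
    (hx : {x} ∉ P.parts) :
    (P.eraseElt x hx).parts = P.parts.image (fun p => p.erase x) := rfl

lemma Finpartition.eraseElt_injOn {s : Finset α} (P : Finpartition s) (x : α)
    (hx : {x} ∉ P.parts) :
    Set.InjOn (fun p => Finset.erase p x) (P.parts : Set (Finset α)) := by
  intro p hp q hq h
  simp only at h
  by_contra hpq
  obtain ⟨a, ha⟩ := P.nonempty_of_mem_parts hp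
  by_cases hax : a = x
  · obtain ⟨c, hc⟩ := P.nonempty_of_mem_parts hq
    by_cases hcx : c = x
    · exact hpq (P.eq_of_mem_parts hp hq ha (by rwa [hax, ← hcx]))
    · have hcp : c ∈ p.erase x := by rw [h]; exact Finset.mem_erase.mpr ⟨hcx, hc⟩
      exact hpq (P.eq_of_mem_parts hp hq (Finset.mem_of_mem_erase hcp) hc)
  · have haq : a ∈ q.erase x := by rw [← h]; exact Finset.mem_erase.mpr ⟨hax, ha⟩
    exact hpq (P.eq_of_mem_parts hp hq ha (Finset.mem_of_mem_erase haq))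

lemma Finpartition.eraseElt_card {s : Finset α} (P : Finpartition s) (x : α)
    (hx : {x} ∉ P.parts) :
    (P.eraseElt x hx).parts.card = P.parts.card := by
  rw [eraseElt_parts, Finset.card_image_of_injOn (P.eraseElt_injOn x hx)]

/-- Insert a new element into a designated block of a partition. -/
def Finpartition.insertElt {t : Finset α} (Q : Finpartition t) {b : Finset α}
    (hb : b ∈ Q.parts) {x : α} (hx : x ∉ t) : Finpartition (insert x t) where
  parts := insert (insert x b) (Q.parts.erase b)
  supIndep := by
    rw [Finset.supIndep_iff_pairwiseDisjoint]
    rintro a ha c hc hac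
    simp only [coe_insert, Set.mem_insert_iff, mem_coe, Finset.mem_erase] at ha hc
    have key : ∀ q ∈ Q.parts, q ≠ b → Disjoint (insert x b) q := by
      intro q hq hqb
      rw [Finset.disjoint_insert_left]
      exact ⟨fun hxq => hx (Q.le hq hxq), Q.disjoint hb hq (Ne.symm hqb)⟩
    rcases ha with rfl | ⟨hab, ha⟩
    · rcases hc with rfl | ⟨hcb, hc⟩
      · exact absurd rfl hac
      · exact key _ hc hcb
    · rcases hc with rfl | ⟨hcb, hc⟩
      · exact (key _ ha hab).symm
      · exact Q.disjoint ha hc (by rintro rfl; exact hac rfl)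
  sup_parts := by
    ext a
    simp only [Finset.mem_sup, Finset.mem_insert, Finset.mem_erase, id]
    constructor
    · rintro ⟨p, hp, hap⟩
      rcases hp with rfl | ⟨hpb, hp⟩
      · rcases Finset.mem_insert.mp hap with rfl | h
        · exact Or.inl rfl
        · exact Or.inr (Q.le hb h)
      · exact Or.inr (Q.le hp hap)
    · rintro (rfl | hat)
      · exact ⟨insert a b, Or.inl rfl, Finset.mem_insert_self a b⟩
      · rcases eq_or_ne (Q.part a) b with hab | hab
        · exact ⟨insert x b, Or.inl rfl, Finset.mem_insert_of_mem (hab ▸ Q.mem_part hat)⟩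
        · exact ⟨Q.part a, Or.inr ⟨hab, Q.part_mem.2 hat⟩, Q.mem_part hat⟩
  bot_notMem := by
    simp only [Finset.bot_eq_empty, Finset.mem_insert, Finset.mem_erase]
    rintro (h | ⟨-, h⟩)
    · exact (Finset.insert_ne_empty x b) h.symm
    · exact Q.bot_notMem h

lemma Finpartition.insertElt_parts {t : Finset α} (Q : Finpartition t) {b : Finset α}
    (hb : b ∈ Q.parts) {x : α} (hx : x ∉ t) :
    (Q.insertElt hb hx).parts = insert (insert x b) (Q.parts.erase b) := rfl

lemma Finpartition.insertElt_card {t : Finset α} (Q : Finpartition t) {b : Finset α}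
    (hb : b ∈ Q.parts) {x : α} (hx : x ∉ t) :
    (Q.insertElt hb hx).parts.card = Q.parts.card := by
  rw [insertElt_parts, Finset.card_insert_of_notMem, Finset.card_erase_of_mem hb]
  · have : 0 < Q.parts.card := Finset.card_pos.mpr ⟨b, hb⟩
    omega
  · intro h
    have h' := Finset.mem_of_mem_erase h
    exact hx (Q.le h' (Finset.mem_insert_self x b))

lemma Finpartition.singleton_not_mem {s : Finset α} (P : Finpartition s) {x : α}
    (hx : x ∈ s) (h2 : 2 ≤ (P.part x).card) : {x} ∉ P.parts := by
  intro h
  have := P.part_eq_of_mem h (Finset.mem_singleton_self x)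
  rw [this] at h2
  simp at h2

/-- marked block lives in the erased partition -/
lemma Finpartition.erase_part_mem {s : Finset α} (P : Finpartition s) {x : α} (hx : x ∈ s)
    (h1 : {x} ∉ P.parts) :
    (P.part x).erase x ∈ (P.eraseElt x h1).parts := by
  rw [eraseElt_parts, Finset.mem_image]
  exact ⟨P.part x, P.part_mem.2 hx, rfl⟩

/-- Round trip 1: insert after erase gives back `P`. -/
lemma Finpartition.insert_erase_eq {s : Finset α} (P : Finpartition s) {x : α} (hx : x ∈ s)
    (h1 : {x} ∉ P.parts) :
    (((P.eraseElt x h1).insertElt (P.erase_part_mem hx h1)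
        (Finset.notMem_erase x s)).copy (Finset.insert_erase hx)) = P := by
  apply Finpartition.ext
  rw [Finpartition.copy_parts, insertElt_parts, eraseElt_parts]
  have hins : insert x ((P.part x).erase x) = P.part x :=
    Finset.insert_erase (P.mem_part hx)
  rw [hins]
  ext q
  simp only [Finset.mem_insert, Finset.mem_erase, Finset.mem_image]
  constructor
  · rintro (rfl | ⟨hq1, p, hp, rfl⟩)
    · exact P.part_mem.2 hx
    · by_cases hxp : x ∈ p
      · exact absurd (by rw [P.part_eq_of_mem hp hxp]) hq1
      · rwa [Finset.erase_eq_of_notMem hxp]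
  · intro hq
    by_cases hqx : q = P.part x
    · exact Or.inl hqx
    · have hxq : x ∉ q := fun hxq => hqx (P.part_eq_of_mem hq hxq).symm
      refine Or.inr ⟨?_, q, hq, Finset.erase_eq_of_notMem hxq⟩
      intro h
      -- q = (P.part x).erase x ⊆ P.part x ; q nonempty → q = P.part x
      obtain ⟨a, ha⟩ := P.nonempty_of_mem_parts hq
      have hap : a ∈ P.part x := Finset.mem_of_mem_erase (h ▸ ha)
      exact hqx (P.eq_of_mem_parts hq (P.part_mem.2 hx) ha hap)

/-- Round trip 2a: the part of `x` in the insert-partition is `insert x b`. -/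
lemma Finpartition.insertElt_part_x {s : Finset α} {x : α} (hx : x ∈ s)
    (Q : Finpartition (s.erase x)) {b : Finset α} (hb : b ∈ Q.parts) :
    (((Q.insertElt hb (Finset.notMem_erase x s)).copy (Finset.insert_erase hx))).part x
      = insert x b := by
  apply Finpartition.part_eq_of_mem
  · rw [Finpartition.copy_parts, insertElt_parts]
    exact Finset.mem_insert_self _ _
  · exact Finset.mem_insert_self x b

lemma Finpartition.insertElt_singleton_not_mem {s : Finset α} {x : α} (hx : x ∈ s)
    (Q : Finpartition (s.erase x)) {b : Finset α} (hb : b ∈ Q.parts) :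
    {x} ∉ (((Q.insertElt hb (Finset.notMem_erase x s)).copy (Finset.insert_erase hx))).parts := by
  rw [Finpartition.copy_parts, insertElt_parts]
  intro h
  rcases Finset.mem_insert.mp h with h | h
  · -- {x} = insert x b → b ⊆ {x} → b = ∅
    obtain ⟨a, ha⟩ := Q.nonempty_of_mem_parts hb
    have hax : a ≠ x := fun h' => (Finset.notMem_erase x s) (h' ▸ Q.le hb ha)
    have : a ∈ ({x} : Finset α) := h ▸ Finset.mem_insert_of_mem ha
    exact hax (Finset.mem_singleton.mp this)
  · have h' := Finset.mem_of_mem_erase h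
    exact (Finset.notMem_erase x s) (Q.le h' (Finset.mem_singleton_self x))

/-- Round trip 2: erase after insert gives back `Q`. -/
lemma Finpartition.erase_insert_eq {s : Finset α} {x : α} (hx : x ∈ s)
    (Q : Finpartition (s.erase x)) {b : Finset α} (hb : b ∈ Q.parts) :
    (((Q.insertElt hb (Finset.notMem_erase x s)).copy (Finset.insert_erase hx))).eraseElt x
      (Finpartition.insertElt_singleton_not_mem hx Q hb) = Q := by
  apply Finpartition.ext
  rw [eraseElt_parts, Finpartition.copy_parts, insertElt_parts]
  have hxb : x ∉ b := fun h => (Finset.notMem_erase x s) (Q.le hb h)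
  rw [Finset.image_insert]
  have h1 : (insert x b).erase x = b := by
    rw [Finset.erase_insert hxb]
  rw [h1]
  have h2 : (Q.parts.erase b).image (fun p => p.erase x) = Q.parts.erase b := by
    apply Finset.image_congr ?_ |>.trans (Finset.image_id)
    intro p hp
    have hp' := Finset.mem_of_mem_erase hp
    exact Finset.erase_eq_of_notMem (fun h => (Finset.notMem_erase x s) (Q.le hp' h))
  rw [h2, Finset.insert_erase hb]

lemma erase_erase_eq_sdiff (s : Finset α) (x y : α) :
    (s.erase x).erase y = s \ ({x, y} : Finset α) := by
  ext a
  simp only [Finset.mem_erase, Finset.mem_sdiff, Finset.mem_insert, Finset.mem_singleton]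
  tauto

/-- Remove the pair block `{x,y}` (total function via `avoid`). -/
def Finpartition.removePair {s : Finset α} (P : Finpartition s) (x y : α) :
    Finpartition ((s.erase x).erase y) :=
  (P.avoid {x, y}).copy (erase_erase_eq_sdiff s x y).symm

lemma Finpartition.removePair_parts {s : Finset α} (P : Finpartition s) {x y : α}
    (hpart : {x, y} ∈ P.parts) :
    (P.removePair x y).parts = P.parts.erase {x, y} := by
  rw [removePair, Finpartition.copy_parts]
  ext c
  rw [Finpartition.mem_avoid, Finset.mem_erase]
  constructor
  · rintro ⟨d, hd, hdle, rfl⟩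
    have hne : d ≠ {x, y} := fun h => hdle (h ▸ le_refl _)
    have hdis : Disjoint d ({x, y} : Finset α) := P.disjoint hd hpart hne
    rw [Finset.sdiff_eq_self_iff_disjoint.mpr hdis]
    exact ⟨hne, hd⟩
  · rintro ⟨hne, hc⟩
    have hdis : Disjoint c ({x, y} : Finset α) := P.disjoint hc hpart hne
    refine ⟨c, hc, ?_, Finset.sdiff_eq_self_iff_disjoint.mpr hdis⟩
    intro hle
    obtain ⟨a, ha⟩ := P.nonempty_of_mem_parts hc
    exact (Finset.disjoint_left.mp hdis ha) (hle ha)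

/-- Add the pair block `{x,y}`. -/
def Finpartition.addPair {s : Finset α} {x y : α} (hx : x ∈ s) (hy : y ∈ s) (hxy : x ≠ y)
    (Q : Finpartition ((s.erase x).erase y)) : Finpartition s :=
  Q.extend (b := ({x, y} : Finset α)) (Finset.insert_ne_empty x {y})
    (by
      rw [erase_erase_eq_sdiff]
      exact Finset.sdiff_disjoint)
    (by
      rw [erase_erase_eq_sdiff]
      rw [Finset.sup_eq_union, Finset.sdiff_union_self_eq_union]
      rw [Finset.union_eq_left.mpr]
      intro a ha
      rcases Finset.mem_insert.mp ha with rfl | ha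
      · exact hx
      · rwa [Finset.mem_singleton.mp ha])

lemma Finpartition.addPair_parts {s : Finset α} {x y : α} (hx : x ∈ s) (hy : y ∈ s) (hxy : x ≠ y)
    (Q : Finpartition ((s.erase x).erase y)) :
    (Finpartition.addPair hx hy hxy Q).parts = insert ({x, y} : Finset α) Q.parts := by
  rw [addPair, Finpartition.extend_parts]

lemma Finpartition.pair_not_mem {s : Finset α} {x y : α}
    (Q : Finpartition ((s.erase x).erase y)) : ({x, y} : Finset α) ∉ Q.parts := by
  intro h
  have := Q.le h (Finset.mem_insert_self x {y})
  rw [Finset.mem_erase, Finset.mem_erase] at this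
  exact this.2.1 rfl

lemma Finpartition.addPair_removePair {s : Finset α} {x y : α} (hx : x ∈ s) (hy : y ∈ s)
    (hxy : x ≠ y) (P : Finpartition s) (hpart : {x, y} ∈ P.parts) :
    Finpartition.addPair hx hy hxy (P.removePair x y) = P := by
  apply Finpartition.ext
  rw [addPair_parts, removePair_parts P hpart, Finset.insert_erase hpart]

lemma Finpartition.removePair_addPair {s : Finset α} {x y : α} (hx : x ∈ s) (hy : y ∈ s)
    (hxy : x ≠ y) (Q : Finpartition ((s.erase x).erase y)) :
    (Finpartition.addPair hx hy hxy Q).removePair x y = Q := by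
  apply Finpartition.ext
  rw [removePair_parts _ (by rw [addPair_parts]; exact Finset.mem_insert_self _ _),
    addPair_parts, Finset.erase_insert (Finpartition.pair_not_mem Q)]

lemma natCard_parts_eq {β : Type*} [LinearOrder β] [DecidableEq β] (s : Finset β) {m k : ℕ}
    (h : s.card = m) :
    Nat.card {P : Finpartition s // P.parts.card = k ∧ ∀ p ∈ P.parts, 2 ≤ p.card}
      = assocStirling m k := by
  have hmap : (univ : Finset (Fin m)).map (s.orderEmbOfFin h).toEmbedding = s := by
    ext b
    simp only [Finset.mem_map, Finset.mem_univ, true_and, RelEmbedding.coe_toEmbedding]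
    constructor
    · rintro ⟨i, rfl⟩
      exact Finset.orderEmbOfFin_mem s h i
    · intro hb
      have hr := Finset.range_orderEmbOfFin s h
      have : b ∈ Set.range (s.orderEmbOfFin h) := by rw [hr]; exact hb
      obtain ⟨i, hi⟩ := this
      exact ⟨i, hi⟩
  rw [assocStirling, ← mapEmb_bij (s.orderEmbOfFin h).toEmbedding univ k, hmap]

lemma assocStirling_zero_zero : assocStirling 0 0 = 1 := by
  rw [assocStirling]
  have hparts : ∀ P : Finpartition (univ : Finset (Fin 0)), P.parts = ∅ := by
    intro P
    rw [Finpartition.parts_eq_empty_iff]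
    rfl
  haveI : Unique {P : Finpartition (univ : Finset (Fin 0)) //
      P.parts.card = 0 ∧ ∀ p ∈ P.parts, 2 ≤ p.card} := by
    refine ⟨⟨⟨⊥, ?_, ?_⟩⟩, ?_⟩
    · rw [hparts]; rfl
    · intro p hp
      rw [hparts] at hp
      exact absurd hp (Finset.notMem_empty p)
    · rintro ⟨P, hP⟩
      apply Subtype.ext
      exact Finpartition.ext (by rw [hparts, hparts])
  exact Nat.card_unique

lemma assocStirling_succ_zero (m : ℕ) : assocStirling (m + 1) 0 = 0 := by
  rw [assocStirling]
  haveI : IsEmpty {P : Finpartition (univ : Finset (Fin (m + 1))) //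
      P.parts.card = 0 ∧ ∀ p ∈ P.parts, 2 ≤ p.card} := by
    refine ⟨fun P => ?_⟩
    have h1 : P.1.parts = ∅ := Finset.card_eq_zero.mp P.2.1
    rw [Finpartition.parts_eq_empty_iff] at h1
    have : (0 : Fin (m+1)) ∈ (univ : Finset (Fin (m+1))) := Finset.mem_univ _
    rw [h1] at this
    exact absurd this (Finset.notMem_empty _)
  exact Nat.card_of_isEmpty

lemma assocStirling_eq_zero {m k : ℕ} (h : m < 2 * k) : assocStirling m k = 0 := by
  rw [assocStirling]
  haveI : IsEmpty {P : Finpartition (univ : Finset (Fin m)) //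
      P.parts.card = k ∧ ∀ p ∈ P.parts, 2 ≤ p.card} := by
    refine ⟨fun P => ?_⟩
    have h1 : 2 * k ≤ m := by
      calc 2 * k = ∑ _p ∈ P.1.parts, 2 := by
            rw [Finset.sum_const, P.2.1, smul_eq_mul, mul_comm]
        _ ≤ ∑ p ∈ P.1.parts, p.card := Finset.sum_le_sum P.2.2
        _ = (univ : Finset (Fin m)).card := P.1.sum_card_parts
        _ = m := by simp
    omega
  exact Nat.card_of_isEmpty

lemma natCard_eq_filter {β : Type*} [DecidableEq β] (s : Finset β) (p : Finpartition s → Prop)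
    [DecidablePred p] :
    Nat.card {P : Finpartition s // p P} = ((univ : Finset (Finpartition s)).filter p).card := by
  rw [Nat.card_eq_fintype_card, Fintype.card_subtype]

set_option maxHeartbeats 2000000 in
lemma assocStirling_rec (m k : ℕ) :
    assocStirling (m + 2) (k + 1)
      = (k + 1) * assocStirling (m + 1) (k + 1) + (m + 1) * assocStirling m k := by
  classical
  set x : Fin (m + 2) := Fin.last (m + 1) with hxdef
  set s : Finset (Fin (m + 2)) := univ with hsdef
  have hxs : x ∈ s := Finset.mem_univ x
  have hscard : s.card = m + 2 := by simp [hsdef]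
  have hserase : (s.erase x).card = m + 1 := by
    rw [Finset.card_erase_of_mem hxs, hscard]
    omega
  set A : Finset (Finpartition s) :=
    univ.filter (fun P => P.parts.card = k + 1 ∧ ∀ p ∈ P.parts, 2 ≤ p.card) with hAdef
  have hA : A.card = assocStirling (m + 2) (k + 1) := by
    rw [hAdef, ← natCard_eq_filter]
    exact (natCard_parts_eq s hscard)
  set A3 : Finset (Finpartition s) := A.filter (fun P => 3 ≤ (P.part x).card) with hA3def
  set A2 : Finset (Finpartition s) := A.filter (fun P => ¬ 3 ≤ (P.part x).card) with hA2def
  have hsplit : A3.card + A2.card = A.card :=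
    Finset.card_filter_add_card_filter_not _
  -- membership unfolding
  have hmemA : ∀ P : Finpartition s, P ∈ A ↔
      (P.parts.card = k + 1 ∧ ∀ p ∈ P.parts, 2 ≤ p.card) := by
    intro P; rw [hAdef, Finset.mem_filter]; simp
  ---- Part I : A3
  set E : Finpartition s → Finpartition (s.erase x) :=
    fun P => if h : {x} ∉ P.parts then P.eraseElt x h else ⊥ with hEdef
  set Bset : Finset (Finpartition (s.erase x)) :=
    univ.filter (fun Q => Q.parts.card = k + 1 ∧ ∀ p ∈ Q.parts, 2 ≤ p.card) with hBdef
  have hmemB : ∀ Q : Finpartition (s.erase x), Q ∈ Bset ↔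
      (Q.parts.card = k + 1 ∧ ∀ p ∈ Q.parts, 2 ≤ p.card) := by
    intro Q; rw [hBdef, Finset.mem_filter]; simp
  have hA3mem : ∀ P : Finpartition s, P ∈ A3 ↔
      ((P.parts.card = k + 1 ∧ ∀ p ∈ P.parts, 2 ≤ p.card) ∧ 3 ≤ (P.part x).card) := by
    intro P; rw [hA3def, Finset.mem_filter, hmemA]
  have hsing : ∀ P ∈ A3, {x} ∉ P.parts := by
    intro P hP
    have h := (hA3mem P).mp hP
    exact P.singleton_not_mem hxs (le_trans (by norm_num) h.2)
  have hEeq : ∀ (P : Finpartition s) (h : {x} ∉ P.parts), E P = P.eraseElt x h := by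
    intro P h; rw [hEdef]; exact dif_pos h
  have hEmem : ∀ P ∈ A3, E P ∈ Bset := by
    intro P hP
    obtain ⟨⟨hc, hs2⟩, h3⟩ := (hA3mem P).mp hP
    rw [hEeq P (hsing P hP), hmemB]
    constructor
    · rw [Finpartition.eraseElt_card, hc]
    · intro q hq
      rw [Finpartition.eraseElt_parts, Finset.mem_image] at hq
      obtain ⟨p, hp, rfl⟩ := hq
      by_cases hxp : x ∈ p
      · have : p = P.part x := (P.part_eq_of_mem hp hxp).symm
        rw [Finset.card_erase_of_mem hxp, this]
        omega
      · rw [Finset.erase_eq_of_notMem hxp]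
        exact hs2 p hp
  have hfib1 : ∀ Q ∈ Bset, (A3.filter (fun P => E P = Q)).card = k + 1 := by
    intro Q hQ
    have hQc := ((hmemB Q).mp hQ).1
    have hQ2 := ((hmemB Q).mp hQ).2
    rw [← hQc]
    refine Finset.card_bij' (fun P _ => (P.part x).erase x)
      (fun b hb => (Q.insertElt hb (Finset.notMem_erase x s)).copy (Finset.insert_erase hxs))
      ?_ ?_ ?_ ?_
    · -- i maps into Q.parts
      intro P hP
      rw [Finset.mem_filter] at hP
      obtain ⟨hP3, hEP⟩ := hP
      have h1 := hsing P hP3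
      have := P.erase_part_mem hxs h1
      rwa [← hEeq P h1, hEP] at this
    · -- j maps into fiber
      intro b hb
      have hxb : x ∉ b := fun h => (Finset.notMem_erase x s) (Q.le hb h)
      have hbc := hQ2 b hb
      have hpartx := Finpartition.insertElt_part_x hxs Q hb
      have hcardb : (insert x b).card = b.card + 1 := Finset.card_insert_of_notMem hxb
      rw [Finset.mem_filter]
      refine ⟨(hA3mem _).mpr ⟨⟨?_, ?_⟩, ?_⟩, ?_⟩
      · rw [Finpartition.copy_parts, Finpartition.insertElt_card, hQc]
      · intro p hp
        rw [Finpartition.copy_parts, Finpartition.insertElt_parts] at hp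
        rcases Finset.mem_insert.mp hp with rfl | hp
        · omega
        · exact hQ2 p (Finset.mem_of_mem_erase hp)
      · rw [hpartx]; omega
      · rw [hEeq _ (Finpartition.insertElt_singleton_not_mem hxs Q hb)]
        exact Finpartition.erase_insert_eq hxs Q hb
    · -- left inverse
      intro P hP
      rw [Finset.mem_filter] at hP
      obtain ⟨hP3, hEP⟩ := hP
      have h1 := hsing P hP3
      subst hEP
      apply Finpartition.ext
      rw [Finpartition.copy_parts, Finpartition.insertElt_parts,
        congrArg Finpartition.parts (hEeq P h1)]
      have hh := congrArg Finpartition.parts (P.insert_erase_eq hxs h1)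
      rw [Finpartition.copy_parts, Finpartition.insertElt_parts] at hh
      exact hh
    · -- right inverse
      intro b hb
      have hxb : x ∉ b := fun h => (Finset.notMem_erase x s) (Q.le hb h)
      show ((((Q.insertElt hb (Finset.notMem_erase x s)).copy
        (Finset.insert_erase hxs))).part x).erase x = b
      rw [Finpartition.insertElt_part_x hxs Q hb, Finset.erase_insert hxb]
  have hBcard : Bset.card = assocStirling (m + 1) (k + 1) := by
    rw [hBdef, ← natCard_eq_filter]
    exact natCard_parts_eq (s.erase x) hserase
  have hA3card : A3.card = (k + 1) * assocStirling (m + 1) (k + 1) := by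
    rw [Finset.card_eq_sum_card_fiberwise hEmem, Finset.sum_congr rfl hfib1,
      Finset.sum_const, hBcard, smul_eq_mul, mul_comm]
  ---- Part II : A2
  set W : Finpartition s → Fin (m + 2) :=
    fun P => if h : ((P.part x).erase x).Nonempty then h.choose else x with hWdef
  have hA2mem : ∀ P : Finpartition s, P ∈ A2 ↔
      ((P.parts.card = k + 1 ∧ ∀ p ∈ P.parts, 2 ≤ p.card) ∧ ¬ 3 ≤ (P.part x).card) := by
    intro P; rw [hA2def, Finset.mem_filter, hmemA]
  have hpart2 : ∀ P ∈ A2, (P.part x).card = 2 := by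
    intro P hP
    obtain ⟨⟨hc, hs2⟩, h3⟩ := (hA2mem P).mp hP
    have := hs2 _ (P.part_mem.2 hxs)
    omega
  have hWspec : ∀ P ∈ A2, W P ≠ x ∧ P.part x = {x, W P} := by
    intro P hP
    have h2 := hpart2 P hP
    have hne : ((P.part x).erase x).Nonempty := by
      rw [← Finset.card_pos, Finset.card_erase_of_mem (P.mem_part hxs), h2]
      norm_num
    have hWP : W P = hne.choose := by rw [hWdef]; exact dif_pos hne
    have hmem := hne.choose_spec
    rw [Finset.mem_erase] at hmem
    refine ⟨hWP ▸ hmem.1, ?_⟩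
    have hsub : ({x, W P} : Finset (Fin (m + 2))) ⊆ P.part x := by
      intro a ha
      rcases Finset.mem_insert.mp ha with rfl | ha
      · exact P.mem_part hxs
      · rw [Finset.mem_singleton.mp ha, hWP]
        exact hmem.2
    have hcard2 : ({x, W P} : Finset (Fin (m + 2))).card = 2 := by
      rw [Finset.card_pair]
      exact fun h => (hWP ▸ hmem.1) h.symm
    exact (Finset.eq_of_subset_of_card_le hsub (by omega)).symm
  have hWmem : ∀ P ∈ A2, W P ∈ s.erase x := by
    intro P hP
    exact Finset.mem_erase.mpr ⟨(hWspec P hP).1, Finset.mem_univ _⟩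
  have hfib2 : ∀ y ∈ s.erase x, (A2.filter (fun P => W P = y)).card = assocStirling m k := by
    intro y hy
    have hyx : y ≠ x := (Finset.mem_erase.mp hy).1
    have hys : y ∈ s := Finset.mem_univ _
    have hcarderase : ((s.erase x).erase y).card = m := by
      rw [Finset.card_erase_of_mem hy, hserase]
      omega
    have hCcard : ((univ : Finset (Finpartition ((s.erase x).erase y))).filter
        (fun Q => Q.parts.card = k ∧ ∀ p ∈ Q.parts, 2 ≤ p.card)).card = assocStirling m k := by
      rw [← natCard_eq_filter]
      exact natCard_parts_eq _ hcarderase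
    rw [← hCcard]
    have hpairP : ∀ P ∈ A2.filter (fun P => W P = y), ({x, y} : Finset (Fin (m+2))) ∈ P.parts := by
      intro P hP
      rw [Finset.mem_filter] at hP
      have := (hWspec P hP.1).2
      rw [hP.2] at this
      exact this ▸ P.part_mem.2 hxs
    refine Finset.card_bij' (fun P _ => P.removePair x y)
      (fun Q _ => Finpartition.addPair hxs hys hyx.symm Q) ?_ ?_ ?_ ?_
    · -- into Cset
      intro P hP
      have hpair := hpairP P hP
      rw [Finset.mem_filter] at hP ⊢
      obtain ⟨hPA2, hWy⟩ := hP
      obtain ⟨⟨hc, hs2⟩, -⟩ := (hA2mem P).mp hPA2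
      refine ⟨Finset.mem_univ _, ?_, ?_⟩
      · rw [Finpartition.removePair_parts P hpair, Finset.card_erase_of_mem hpair, hc]
        omega
      · intro p hp
        rw [Finpartition.removePair_parts P hpair] at hp
        exact hs2 p (Finset.mem_of_mem_erase hp)
    · -- back into fiber
      intro Q hQ
      rw [Finset.mem_filter] at hQ
      obtain ⟨-, hQc, hQ2⟩ := hQ
      have hparts := Finpartition.addPair_parts hxs hys hyx.symm Q
      have hpairmem : ({x, y} : Finset (Fin (m+2))) ∈ (Finpartition.addPair hxs hys hyx.symm Q).parts := by
        rw [hparts]; exact Finset.mem_insert_self _ _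
      have hpartx : (Finpartition.addPair hxs hys hyx.symm Q).part x = {x, y} :=
        Finpartition.part_eq_of_mem _ hpairmem (Finset.mem_insert_self _ _)
      have hcardxy : ({x, y} : Finset (Fin (m+2))).card = 2 :=
        Finset.card_pair hyx.symm
      rw [Finset.mem_filter]
      constructor
      · rw [hA2mem]
        refine ⟨⟨?_, ?_⟩, ?_⟩
        · rw [hparts, Finset.card_insert_of_notMem (Finpartition.pair_not_mem Q), hQc]
        · intro p hp
          rw [hparts] at hp
          rcases Finset.mem_insert.mp hp with rfl | hp
          · omega
          · exact hQ2 p hp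
        · rw [hpartx, hcardxy]; norm_num
      · -- W = y
        have herase : (({x, y} : Finset (Fin (m+2))).erase x) = {y} := by
          rw [Finset.erase_insert (by simp only [Finset.mem_singleton]; exact Ne.symm hyx)]
        have hne : (((Finpartition.addPair hxs hys hyx.symm Q).part x).erase x).Nonempty := by
          rw [hpartx, herase]
          exact ⟨y, Finset.mem_singleton_self y⟩
        have : W (Finpartition.addPair hxs hys hyx.symm Q) = hne.choose := by
          rw [hWdef]; exact dif_pos hne
        rw [this]
        have h0 : hne.choose ∈ (({x, y} : Finset (Fin (m+2)))).erase x := by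
          rw [← hpartx]; exact hne.choose_spec
        rw [herase] at h0
        exact Finset.mem_singleton.mp h0
    · -- left inverse
      intro P hP
      exact Finpartition.addPair_removePair hxs hys hyx.symm P (hpairP P hP)
    · -- right inverse
      intro Q hQ
      exact Finpartition.removePair_addPair hxs hys hyx.symm Q
  have hA2card : A2.card = (m + 1) * assocStirling m k := by
    rw [Finset.card_eq_sum_card_fiberwise hWmem, Finset.sum_congr rfl hfib2,
      Finset.sum_const, hserase, smul_eq_mul]
  rw [← hA, ← hsplit, hA3card, hA2card]

lemma absorb (A B : ℕ) :
    ((B : ℤ) + 1) * (A.choose (B + 1) : ℤ) = ((A : ℤ) - B) * (A.choose B : ℤ) := by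
  have h1 : ((A : ℤ) + 1) * (A.choose B : ℤ) = ((A + 1).choose (B + 1) : ℤ) * ((B : ℤ) + 1) := by
    exact_mod_cast Nat.add_one_mul_choose_eq A B
  have h2 : (((A + 1).choose (B + 1)) : ℤ) = (A.choose B : ℤ) + (A.choose (B + 1) : ℤ) := by
    exact_mod_cast Nat.choose_succ_succ A B
  linear_combination (-1 : ℤ) * h1 - ((B : ℤ) + 1) * h2

lemma pointwise_id (n k j : ℕ) (hj : j ≤ k) :
    (-1 : ℤ) ^ (k + 1 - j) * (j : ℤ) * (assocStirling (n + j) j : ℤ)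
        * ((n + 1 - j).choose (k + 1 - j) : ℤ)
      + (-1 : ℤ) ^ (k - j) * ((n : ℤ) + j + 1) * (assocStirling (n + j) j : ℤ)
        * ((n - j).choose (k - j) : ℤ)
    = ((k : ℤ) + 1) * ((-1 : ℤ) ^ (k + 1 - j) * (assocStirling (n + j) j : ℤ)
        * ((n - j).choose (k + 1 - j) : ℤ))
      + (2 * ((n : ℤ) + 1) - ((k : ℤ) + 1)) * ((-1 : ℤ) ^ (k - j) * (assocStirling (n + j) j : ℤ)
        * ((n - j).choose (k - j) : ℤ)) := by
  by_cases hn : j ≤ n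
  · have e1 : k + 1 - j = (k - j) + 1 := by omega
    have e2 : n + 1 - j = (n - j) + 1 := by omega
    rw [e1, e2, pow_succ]
    have pascal : ((((n - j) + 1).choose ((k - j) + 1)) : ℤ)
        = ((n - j).choose (k - j) : ℤ) + ((n - j).choose ((k - j) + 1) : ℤ) := by
      exact_mod_cast Nat.choose_succ_succ (n - j) (k - j)
    rw [pascal]
    have habs := absorb (n - j) (k - j)
    rw [Nat.cast_sub hn, Nat.cast_sub hj] at habs
    linear_combination ((-1 : ℤ) ^ (k - j) * (assocStirling (n + j) j : ℤ)) * habs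
  · have hz : assocStirling (n + j) j = 0 := assocStirling_eq_zero (by omega)
    rw [hz]
    push_cast
    ring

lemma key_identity (n k : ℕ) :
    ∑ j ∈ Finset.range (k + 2), (-1 : ℤ) ^ (k + 1 - j) * (assocStirling (n + 1 + j) j : ℤ)
        * ((n + 1 - j).choose (k + 1 - j) : ℤ)
      = ((k : ℤ) + 1) * ∑ j ∈ Finset.range (k + 2), (-1 : ℤ) ^ (k + 1 - j)
            * (assocStirling (n + j) j : ℤ) * ((n - j).choose (k + 1 - j) : ℤ)
        + (2 * ((n : ℤ) + 1) - ((k : ℤ) + 1)) * ∑ j ∈ Finset.range (k + 1), (-1 : ℤ) ^ (k - j)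
            * (assocStirling (n + j) j : ℤ) * ((n - j).choose (k - j) : ℤ) := by
  have hLHS : ∑ j ∈ Finset.range (k + 2), (-1 : ℤ) ^ (k + 1 - j) * (assocStirling (n + 1 + j) j : ℤ)
        * ((n + 1 - j).choose (k + 1 - j) : ℤ)
      = ∑ j ∈ Finset.range (k + 2), ((-1 : ℤ) ^ (k + 1 - j) * (j : ℤ)
          * (assocStirling (n + j) j : ℤ) * ((n + 1 - j).choose (k + 1 - j) : ℤ))
        + ∑ j ∈ Finset.range (k + 1), ((-1 : ℤ) ^ (k - j) * ((n : ℤ) + j + 1)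
          * (assocStirling (n + j) j : ℤ) * ((n - j).choose (k - j) : ℤ)) := by
    rw [Finset.sum_range_succ' (fun j => (-1 : ℤ) ^ (k + 1 - j) * (assocStirling (n + 1 + j) j : ℤ)
          * ((n + 1 - j).choose (k + 1 - j) : ℤ)) (k + 1),
        Finset.sum_range_succ' (fun j => (-1 : ℤ) ^ (k + 1 - j) * (j : ℤ)
          * (assocStirling (n + j) j : ℤ) * ((n + 1 - j).choose (k + 1 - j) : ℤ)) (k + 1)]
    have h1 : ∀ i ∈ Finset.range (k + 1),
        (-1 : ℤ) ^ (k + 1 - (i + 1)) * (assocStirling (n + 1 + (i + 1)) (i + 1) : ℤ)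
            * ((n + 1 - (i + 1)).choose (k + 1 - (i + 1)) : ℤ)
        = ((-1 : ℤ) ^ (k + 1 - (i + 1)) * ((i + 1 : ℕ) : ℤ)
              * (assocStirling (n + (i + 1)) (i + 1) : ℤ)
              * ((n + 1 - (i + 1)).choose (k + 1 - (i + 1)) : ℤ))
          + ((-1 : ℤ) ^ (k - i) * ((n : ℤ) + i + 1)
              * (assocStirling (n + i) i : ℤ) * ((n - i).choose (k - i) : ℤ)) := by
      intro i hi
      have hrec := assocStirling_rec (n + i) i
      rw [show n + 1 + (i + 1) = n + i + 2 from by omega, hrec,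
          show k + 1 - (i + 1) = k - i from by omega, show n + 1 - (i + 1) = n - i from by omega,
          show n + (i + 1) = n + i + 1 from by omega]
      push_cast
      ring
    rw [Finset.sum_congr rfl h1, Finset.sum_add_distrib]
    norm_num [assocStirling_succ_zero]
  rw [hLHS, Finset.mul_sum, Finset.mul_sum]
  rw [Finset.sum_range_succ (fun j => (-1 : ℤ) ^ (k + 1 - j) * (j : ℤ)
        * (assocStirling (n + j) j : ℤ) * ((n + 1 - j).choose (k + 1 - j) : ℤ)) (k + 1),
      Finset.sum_range_succ (fun j => ((k : ℤ) + 1) * ((-1 : ℤ) ^ (k + 1 - j)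
        * (assocStirling (n + j) j : ℤ) * ((n - j).choose (k + 1 - j) : ℤ))) (k + 1)]
  have htop : (-1 : ℤ) ^ (k + 1 - (k + 1)) * ((k + 1 : ℕ) : ℤ)
        * (assocStirling (n + (k + 1)) (k + 1) : ℤ)
        * ((n + 1 - (k + 1)).choose (k + 1 - (k + 1)) : ℤ)
      = ((k : ℤ) + 1) * ((-1 : ℤ) ^ (k + 1 - (k + 1))
        * (assocStirling (n + (k + 1)) (k + 1) : ℤ)
        * ((n - (k + 1)).choose (k + 1 - (k + 1)) : ℤ)) := by
    rw [show k + 1 - (k + 1) = 0 from by omega]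
    simp only [pow_zero, Nat.choose_zero_right, Nat.cast_one]
    push_cast
    ring
  have hpt : ∀ j ∈ Finset.range (k + 1),
      ((-1 : ℤ) ^ (k + 1 - j) * (j : ℤ) * (assocStirling (n + j) j : ℤ)
          * ((n + 1 - j).choose (k + 1 - j) : ℤ))
        + ((-1 : ℤ) ^ (k - j) * ((n : ℤ) + j + 1) * (assocStirling (n + j) j : ℤ)
          * ((n - j).choose (k - j) : ℤ))
      = (((k : ℤ) + 1) * ((-1 : ℤ) ^ (k + 1 - j) * (assocStirling (n + j) j : ℤ)
          * ((n - j).choose (k + 1 - j) : ℤ)))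
        + ((2 * ((n : ℤ) + 1) - ((k : ℤ) + 1)) * ((-1 : ℤ) ^ (k - j)
          * (assocStirling (n + j) j : ℤ) * ((n - j).choose (k - j) : ℤ))) := by
    intro j hj
    have hj' := Finset.mem_range.mp hj
    exact pointwise_id n k j (by omega)
  have hsum : ∑ j ∈ Finset.range (k + 1),
      (((-1 : ℤ) ^ (k + 1 - j) * (j : ℤ) * (assocStirling (n + j) j : ℤ)
          * ((n + 1 - j).choose (k + 1 - j) : ℤ))
        + ((-1 : ℤ) ^ (k - j) * ((n : ℤ) + j + 1) * (assocStirling (n + j) j : ℤ)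
          * ((n - j).choose (k - j) : ℤ)))
      = ∑ j ∈ Finset.range (k + 1),
      ((((k : ℤ) + 1) * ((-1 : ℤ) ^ (k + 1 - j) * (assocStirling (n + j) j : ℤ)
          * ((n - j).choose (k + 1 - j) : ℤ)))
        + ((2 * ((n : ℤ) + 1) - ((k : ℤ) + 1)) * ((-1 : ℤ) ^ (k - j)
          * (assocStirling (n + j) j : ℤ) * ((n - j).choose (k - j) : ℤ)))) :=
    Finset.sum_congr rfl hpt
  have hL : ∑ j ∈ Finset.range (k + 1),
      (((-1 : ℤ) ^ (k + 1 - j) * (j : ℤ) * (assocStirling (n + j) j : ℤ)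
          * ((n + 1 - j).choose (k + 1 - j) : ℤ))
        + ((-1 : ℤ) ^ (k - j) * ((n : ℤ) + j + 1) * (assocStirling (n + j) j : ℤ)
          * ((n - j).choose (k - j) : ℤ)))
      = (∑ j ∈ Finset.range (k + 1), ((-1 : ℤ) ^ (k + 1 - j) * (j : ℤ)
          * (assocStirling (n + j) j : ℤ) * ((n + 1 - j).choose (k + 1 - j) : ℤ)))
        + (∑ j ∈ Finset.range (k + 1), ((-1 : ℤ) ^ (k - j) * ((n : ℤ) + j + 1)
          * (assocStirling (n + j) j : ℤ) * ((n - j).choose (k - j) : ℤ))) :=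
    Finset.sum_add_distrib
  have hR : ∑ j ∈ Finset.range (k + 1),
      ((((k : ℤ) + 1) * ((-1 : ℤ) ^ (k + 1 - j) * (assocStirling (n + j) j : ℤ)
          * ((n - j).choose (k + 1 - j) : ℤ)))
        + ((2 * ((n : ℤ) + 1) - ((k : ℤ) + 1)) * ((-1 : ℤ) ^ (k - j)
          * (assocStirling (n + j) j : ℤ) * ((n - j).choose (k - j) : ℤ))))
      = (∑ j ∈ Finset.range (k + 1), (((k : ℤ) + 1) * ((-1 : ℤ) ^ (k + 1 - j)
          * (assocStirling (n + j) j : ℤ) * ((n - j).choose (k + 1 - j) : ℤ))))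
        + (∑ j ∈ Finset.range (k + 1), ((2 * ((n : ℤ) + 1) - ((k : ℤ) + 1))
          * ((-1 : ℤ) ^ (k - j) * (assocStirling (n + j) j : ℤ)
          * ((n - j).choose (k - j) : ℤ)))) :=
    Finset.sum_add_distrib
  linear_combination (-1 : ℤ) * hL + hsum + hR + htop


/-- The second-order Eulerian numbers with traditional indexing, defined by
`B(n,k) = k·B(n-1,k) + (2n-k)·B(n-1,k-1) + δ_{n0}δ_{k0}` (vanishing for
negative indices), satisfy
`B(n,k) = ∑_{j=0}^{k} (-1)^{k-j} {n+j over j}_{≥2} C(n-j, k-j)`. -/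
theorem stmt15 (B : ℕ → ℕ → ℤ)
    (h00 : B 0 0 = 1) (h0k : ∀ k, B 0 (k + 1) = 0)
    (hn0 : ∀ n, B (n + 1) 0 = 0 * B n 0)
    (hrec : ∀ n k : ℕ, B (n + 1) (k + 1) =
      ((k : ℤ) + 1) * B n (k + 1) +
      (2 * ((n : ℤ) + 1) - ((k : ℤ) + 1)) * B n k)
    (n k : ℕ) :
    B n k = ∑ j ∈ Finset.range (k + 1),
      (-1 : ℤ) ^ (k - j) * (assocStirling (n + j) j : ℤ) * ((n - j).choose (k - j) : ℤ) := by
  induction n generalizing k with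
  | zero =>
    cases k with
    | zero =>
      rw [h00, Finset.sum_range_one]
      norm_num [assocStirling_zero_zero]
    | succ k =>
      rw [h0k k]
      symm
      apply Finset.sum_eq_zero
      intro j hj
      rcases Nat.eq_zero_or_pos j with rfl | hjpos
      · have h0 : (0 - 0).choose (k + 1 - 0) = 0 := Nat.choose_eq_zero_of_lt (by omega)
        rw [h0]
        push_cast
        ring
      · rw [assocStirling_eq_zero (show 0 + j < 2 * j by omega)]
        push_cast
        ring
  | succ n ih =>
    cases k with
    | zero =>
      rw [hn0 n, Finset.sum_range_one]
      norm_num [assocStirling_succ_zero]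
    | succ k =>
      rw [hrec n k, ih (k + 1), ih k]
      exact (key_identity n k).symm
end

section
/- The powers of the tree function satisfy T(z)^s = ∑_{k=0}^{∞} (s·(k+s)^{k-1}/k!)·z^{s+k} as formal power series, for every positive integer s, where T(z) = ∑_{n≥1} n^{n-1} z^n / n! is the tree function satisfying T(z)·e^{−T(z)} = z. -/
open PowerSeries

/-- The tree function `T(z) = ∑_{n≥1} n^{n-1} z^n / n!`, the compositional
inverse of `z e^{-z}`, as a formal power series over `ℚ`. -/
noncomputable def treeFun : PowerSeries ℚ :=
  PowerSeries.mk (fun n => if n = 0 then 0 else ((n : ℚ) ^ (n - 1)) / (n.factorial : ℚ))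


open Polynomial

/-- The Abel polynomials `A_0 = 1`, `A_{n+1}(x) = x (x + n + 1)^n`. -/
noncomputable def abelP : ℕ → Polynomial ℚ
  | 0 => 1
  | (n+1) => Polynomial.X * (Polynomial.X + Polynomial.C ((n : ℚ) + 1)) ^ n

lemma abelP_deriv (n : ℕ) :
    Polynomial.derivative (abelP (n + 1)) = ((n : ℚ) + 1) • ((abelP n).comp (Polynomial.X + 1)) := by
  cases n with
  | zero => simp [abelP]
  | succ j =>
    simp only [abelP, Nat.cast_succ]
    rw [Polynomial.derivative_mul, Polynomial.derivative_pow, Polynomial.derivative_X, Polynomial.derivative_add, Polynomial.derivative_X,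
      Polynomial.derivative_C, mul_comp, X_comp, pow_comp, add_comp, X_comp, C_comp]
    have h : (Polynomial.X + Polynomial.C ((j:ℚ)+1+1)) = (Polynomial.X + 1 + Polynomial.C ((j:ℚ)+1)) := by
      rw [map_add, map_one]; ring
    rw [h, pow_succ]
    simp only [Nat.add_sub_cancel, Nat.cast_add, Nat.cast_one, Polynomial.smul_eq_C_mul,
      map_add, map_one, mul_one]
    ring

lemma abelP_eval_zero (n : ℕ) : (abelP n).eval 0 = if n = 0 then 1 else 0 := by
  cases n <;> simp [abelP]

lemma abel_key (n : ℕ) :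
    ∑ k ∈ Finset.range (n+1), (n.choose k : ℚ) • (abelP k * Polynomial.C ((abelP (n-k)).eval 1))
      = (abelP n).comp (Polynomial.X + 1) := by
  induction n with
  | zero => simp [abelP]
  | succ n ih =>
    set L := ∑ k ∈ Finset.range (n+1+1),
      ((n+1).choose k : ℚ) • (abelP k * Polynomial.C ((abelP (n+1-k)).eval 1)) with hLdef
    have hdL : Polynomial.derivative L = ((n:ℚ)+1) • (((abelP n).comp (Polynomial.X+1)).comp (Polynomial.X+1)) := by
      rw [hLdef, map_sum, Finset.sum_range_succ']
      have h0 : Polynomial.derivative (((n+1).choose 0 : ℚ) • (abelP 0 * Polynomial.C ((abelP (n+1-0)).eval 1))) = 0 := by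
        rw [show abelP 0 = 1 from rfl, one_mul, Polynomial.derivative_smul, Polynomial.derivative_C, smul_zero]
      rw [h0, add_zero]
      have hterm : ∀ i ∈ Finset.range (n+1),
          Polynomial.derivative (((n+1).choose (i+1) : ℚ) • (abelP (i+1) * Polynomial.C ((abelP (n+1-(i+1))).eval 1)))
          = ((n:ℚ)+1) • (((n.choose i : ℚ) • (abelP i * Polynomial.C ((abelP (n-i)).eval 1))).comp (Polynomial.X+1)) := by
        intro i hi
        rw [Polynomial.derivative_smul, Polynomial.derivative_mul, Polynomial.derivative_C, mul_zero, add_zero,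
          abelP_deriv, Nat.succ_sub_succ, smul_comp, mul_comp, C_comp]
        rw [smul_mul_assoc, smul_smul, smul_smul]
        congr 1
        exact_mod_cast (Nat.add_one_mul_choose_eq n i).symm
      rw [Finset.sum_congr rfl hterm, ← Finset.smul_sum]
      congr 1
      rw [← ih]
      simp only [Polynomial.comp]
      exact (Polynomial.eval₂_finset_sum _ _ _ _).symm
    have hdR : Polynomial.derivative ((abelP (n+1)).comp (Polynomial.X+1))
        = ((n:ℚ)+1) • (((abelP n).comp (Polynomial.X+1)).comp (Polynomial.X+1)) := by
      rw [Polynomial.derivative_comp, abelP_deriv, Polynomial.derivative_add, Polynomial.derivative_X, Polynomial.derivative_one,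
        add_zero, one_mul, smul_comp]
    have hd : Polynomial.derivative (L - (abelP (n+1)).comp (Polynomial.X+1)) = 0 := by
      rw [Polynomial.derivative_sub, hdL, hdR, sub_self]
    have hC := eq_C_of_derivative_eq_zero hd
    have hL0 : eval 0 L = eval 1 (abelP (n+1)) := by
      rw [hLdef, eval_finset_sum, Finset.sum_eq_single_of_mem 0 (by simp)]
      · simp [abelP]
      · intro b _ hb
        simp [abelP_eval_zero, hb]
    have h0 : (L - (abelP (n+1)).comp (Polynomial.X+1)).coeff 0 = 0 := by
      rw [coeff_zero_eq_eval_zero, eval_sub, hL0, eval_comp, eval_add, eval_X, eval_one,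
        zero_add, sub_self]
    rw [h0, map_zero] at hC
    exact sub_eq_zero.mp hC

lemma abel_eval (n : ℕ) (x : ℚ) :
    ∑ k ∈ Finset.range (n+1), (n.choose k : ℚ) * ((abelP k).eval x * (abelP (n-k)).eval 1)
      = (abelP n).eval (x+1) := by
  have h := congrArg (eval x) (abel_key n)
  rw [eval_finset_sum, eval_comp, eval_add, eval_X, eval_one] at h
  simpa using h

lemma abel_div (n : ℕ) (x : ℚ) :
    ∑ k ∈ Finset.range (n+1),
        (abelP k).eval x / k.factorial * ((abelP (n-k)).eval 1 / (n-k).factorial)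
      = (abelP n).eval (x+1) / n.factorial := by
  have hn : (n.factorial : ℚ) ≠ 0 := Nat.cast_ne_zero.mpr n.factorial_ne_zero
  rw [eq_div_iff hn, ← abel_eval n x, Finset.sum_mul]
  refine Finset.sum_congr rfl fun k hk => ?_
  have hk' : k ≤ n := Nat.lt_succ_iff.mp (Finset.mem_range.mp hk)
  rw [Nat.cast_choose ℚ hk']
  have h1 : (k.factorial : ℚ) ≠ 0 := Nat.cast_ne_zero.mpr k.factorial_ne_zero
  have h2 : ((n-k).factorial : ℚ) ≠ 0 := Nat.cast_ne_zero.mpr (n-k).factorial_ne_zero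
  field_simp

/-- The claimed coefficients of `T^s`, in Abel-polynomial form. -/
noncomputable def tcoeff (s m : ℕ) : ℚ :=
  if m < s then 0 else (abelP (m - s)).eval (s : ℚ) / ((m - s).factorial : ℚ)

lemma treeFun_coeff_succ (j : ℕ) :
    PowerSeries.coeff (j+1) treeFun = (abelP j).eval 1 / j.factorial := by
  rw [treeFun, coeff_mk]
  cases j with
  | zero => simp [abelP]
  | succ i =>
    rw [if_neg (Nat.succ_ne_zero _)]
    have h2 : ((i+1).factorial : ℚ) ≠ 0 := Nat.cast_ne_zero.mpr (i+1).factorial_ne_zero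
    simp only [abelP, eval_mul, eval_one, eval_pow, eval_add, eval_X, eval_C,
      Nat.factorial_succ (i+1), Nat.add_sub_cancel]
    push_cast
    rw [pow_succ]
    field_simp
    ring

lemma treeFun_coeff_zero : PowerSeries.coeff 0 treeFun = 0 := by
  rw [treeFun, coeff_mk]; simp

lemma tcoeff_add (s k : ℕ) :
    tcoeff s (s + k) = (abelP k).eval (s : ℚ) / (k.factorial : ℚ) := by
  rw [tcoeff, if_neg (by omega), Nat.add_sub_cancel_left]

lemma main_lemma (s : ℕ) (hs : 1 ≤ s) : treeFun ^ s = PowerSeries.mk (tcoeff s) := by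
  induction s, hs using Nat.le_induction with
  | base =>
    rw [pow_one]
    ext m
    rw [coeff_mk]
    cases m with
    | zero => rw [treeFun_coeff_zero, tcoeff, if_pos (by omega)]
    | succ j =>
      rw [treeFun_coeff_succ]
      rw [show j + 1 = 1 + j from by omega, tcoeff_add]
      norm_num
  | succ s hs ih =>
    rw [pow_succ, ih]
    ext m
    rw [PowerSeries.coeff_mul, Finset.Nat.sum_antidiagonal_eq_sum_range_succ_mk, coeff_mk]
    simp only [coeff_mk]
    by_cases hm : m < s + 1
    · rw [tcoeff, if_pos hm]
      refine Finset.sum_eq_zero fun i hi => ?_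
      rcases lt_or_ge i s with h | h
      · rw [tcoeff, if_pos h, zero_mul]
      · have hi' : i ≤ m := Nat.lt_succ_iff.mp (Finset.mem_range.mp hi)
        have : i = m := by omega
        subst this
        rw [Nat.sub_self, treeFun_coeff_zero, mul_zero]
    · obtain ⟨n, rfl⟩ : ∃ n, m = s + 1 + n := ⟨m - (s+1), by omega⟩
      have hsum : ∑ i ∈ Finset.range (s+1+n+1), tcoeff s i * (PowerSeries.coeff (s+1+n-i)) treeFun
          = ∑ i ∈ Finset.Ico s (s+n+1), tcoeff s i * (PowerSeries.coeff (s+1+n-i)) treeFun := by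
        refine (Finset.sum_subset (fun i hi => ?_) (fun i hi hni => ?_)).symm
        · rw [Finset.mem_Ico] at hi; exact Finset.mem_range.mpr (by omega)
        · rw [Finset.mem_range] at hi; rw [Finset.mem_Ico] at hni
          rcases lt_or_ge i s with h | h
          · rw [tcoeff, if_pos h, zero_mul]
          · have : i = s + 1 + n := by omega
            subst this
            rw [Nat.sub_self, treeFun_coeff_zero, mul_zero]
      rw [hsum, Finset.sum_Ico_eq_sum_range]
      have hrange : s + n + 1 - s = n + 1 := by omega
      rw [hrange]
      have hterm : ∀ k ∈ Finset.range (n+1),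
          tcoeff s (s + k) * (PowerSeries.coeff (s+1+n-(s+k))) treeFun
          = (abelP k).eval (s:ℚ) / k.factorial * ((abelP (n-k)).eval 1 / (n-k).factorial) := by
        intro k hk
        have hk' : k ≤ n := Nat.lt_succ_iff.mp (Finset.mem_range.mp hk)
        have : s + 1 + n - (s + k) = (n - k) + 1 := by omega
        rw [this, tcoeff_add, treeFun_coeff_succ]
      rw [Finset.sum_congr rfl hterm, abel_div]
      rw [show s + 1 + n = (s+1) + n from by omega, tcoeff_add]
      push_cast
      ring

/-- Powers of the tree function: for a positive integer `s`,
`T(z)^s = ∑_{k≥0} (s (k+s)^{k-1} / k!) z^{s+k}`, where `(k+s)^{k-1}` is read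
as `1/s` when `k = 0` (so that the `k = 0` coefficient equals `1`). -/
theorem stmt17 (s : ℕ) (hs : 1 ≤ s) :
    treeFun ^ s = PowerSeries.mk (fun m =>
      if m < s then 0
      else if m = s then 1
      else (s : ℚ) * (((m - s : ℕ) : ℚ) + (s : ℚ)) ^ ((m - s) - 1) / ((m - s).factorial : ℚ)) := by
  rw [main_lemma s hs]
  ext m
  rw [coeff_mk, coeff_mk]
  by_cases h1 : m < s
  · rw [tcoeff, if_pos h1, if_pos h1]
  · rw [if_neg h1]
    by_cases h2 : m = s
    · subst h2
      rw [if_pos rfl, tcoeff, if_neg h1, Nat.sub_self]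
      simp [abelP]
    · rw [if_neg h2, tcoeff, if_neg h1]
      obtain ⟨j, hj⟩ : ∃ j, m - s = j + 1 := ⟨m - s - 1, by omega⟩
      rw [hj]
      simp only [abelP, eval_mul, eval_pow, eval_add, eval_X, eval_C, Nat.add_sub_cancel]
      push_cast
      ring
end
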